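/- arXiv:0909.2420 — 3 statements merged into one kernel-verified Lean document; each statement's English description precedes it below -/
import Mathlib

section
/- For all real numbers x, y in the interval [0, π/2], cos(√(x² + y²)) ≤ cos(x)·cos(y). -/
open Real Set

lemma mul_cos_le_sin {s : ℝ} (h0 : 0 ≤ s) (h1 : s ≤ Real.pi) :
    s * Real.cos s ≤ Real.sin s := by
  rcases eq_or_lt_of_le h0 with h | h
  · simp [← h]
  rcases lt_or_ge s (Real.pi / 2) with h2 | h2
  · have ht := Real.lt_tan h h2
    have hc : 0 < Real.cos s := Real.cos_pos_of_mem_Ioo ⟨by linarith [Real.pi_pos], h2⟩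
    rw [Real.tan_eq_sin_div_cos, lt_div_iff₀ hc] at ht
    linarith
  · have hc : Real.cos s ≤ 0 := Real.cos_nonpos_of_pi_div_two_le_of_le h2 (by linarith)
    have hs : 0 ≤ Real.sin s := Real.sin_nonneg_of_nonneg_of_le_pi h0 h1
    nlinarith

lemma convex_cos_sqrt :
    ConvexOn ℝ (Set.Icc (0:ℝ) (Real.pi ^ 2)) (fun t => Real.cos (Real.sqrt t)) := by
  have hD : Convex ℝ (Set.Icc (0:ℝ) (Real.pi ^ 2)) := convex_Icc _ _
  have hint : interior (Set.Icc (0:ℝ) (Real.pi ^ 2)) = Set.Ioo 0 (Real.pi ^ 2) :=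
    interior_Icc
  refine convexOn_of_hasDerivWithinAt2_nonneg hD
    (f' := fun t => -Real.sin (Real.sqrt t) / (2 * Real.sqrt t))
    (f'' := fun t => (Real.sin (Real.sqrt t) - Real.sqrt t * Real.cos (Real.sqrt t)) /
      (4 * Real.sqrt t ^ 3))
    ((Real.continuous_cos.comp Real.continuous_sqrt).continuousOn) ?_ ?_ ?_
  · intro t ht
    rw [hint] at ht
    have htpos : 0 < t := ht.1
    have hs : 0 < Real.sqrt t := Real.sqrt_pos.mpr htpos
    have h1 : HasDerivAt (fun t => Real.sqrt t) (1 / (2 * Real.sqrt t)) t :=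
      Real.hasDerivAt_sqrt htpos.ne'
    have h2 : HasDerivAt (fun t => Real.cos (Real.sqrt t))
        (-Real.sin (Real.sqrt t) * (1 / (2 * Real.sqrt t))) t :=
      (Real.hasDerivAt_cos (Real.sqrt t)).comp t h1
    have heq : -Real.sin (Real.sqrt t) * (1 / (2 * Real.sqrt t)) =
        -Real.sin (Real.sqrt t) / (2 * Real.sqrt t) := by ring
    exact (heq ▸ h2).hasDerivWithinAt
  · intro t ht
    rw [hint] at ht
    have htpos : 0 < t := ht.1
    have hs : 0 < Real.sqrt t := Real.sqrt_pos.mpr htpos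
    have h1 : HasDerivAt (fun t => Real.sqrt t) (1 / (2 * Real.sqrt t)) t :=
      Real.hasDerivAt_sqrt htpos.ne'
    have hnum : HasDerivAt (fun t => -Real.sin (Real.sqrt t))
        (-(Real.cos (Real.sqrt t) * (1 / (2 * Real.sqrt t)))) t :=
      (((Real.hasDerivAt_sin (Real.sqrt t)).comp t h1)).neg
    have hden : HasDerivAt (fun t => 2 * Real.sqrt t) (2 * (1 / (2 * Real.sqrt t))) t :=
      h1.const_mul 2
    have hden0 : 2 * Real.sqrt t ≠ 0 := by positivity
    have h3 := hnum.div hden hden0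
    have heq : (-(Real.cos (Real.sqrt t) * (1 / (2 * Real.sqrt t))) * (2 * Real.sqrt t) -
        -Real.sin (Real.sqrt t) * (2 * (1 / (2 * Real.sqrt t)))) / (2 * Real.sqrt t) ^ 2 =
        (Real.sin (Real.sqrt t) - Real.sqrt t * Real.cos (Real.sqrt t)) /
          (4 * Real.sqrt t ^ 3) := by
      field_simp
      ring
    exact (heq ▸ h3).hasDerivWithinAt
  · intro t ht
    rw [hint] at ht
    have htpos : 0 < t := ht.1
    have hs : 0 < Real.sqrt t := Real.sqrt_pos.mpr htpos
    have hle : Real.sqrt t ≤ Real.pi := by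
      rw [show Real.pi = Real.sqrt (Real.pi ^ 2) by
        rw [Real.sqrt_sq Real.pi_pos.le]]
      exact Real.sqrt_le_sqrt ht.2.le
    have := mul_cos_le_sin hs.le hle
    have hpos : (0:ℝ) < 4 * Real.sqrt t ^ 3 := by positivity
    exact div_nonneg (by linarith) hpos.le

theorem cos_sqrt_sq_add_sq_le (x y : ℝ) (hx : x ∈ Set.Icc 0 (Real.pi / 2))
    (hy : y ∈ Set.Icc 0 (Real.pi / 2)) :
    Real.cos (Real.sqrt (x ^ 2 + y ^ 2)) ≤ Real.cos x * Real.cos y := by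
  obtain ⟨hx0, hx1⟩ := hx
  obtain ⟨hy0, hy1⟩ := hy
  have hpi := Real.pi_pos
  have ha : (x + y) ^ 2 ∈ Set.Icc (0:ℝ) (Real.pi ^ 2) := by
    constructor
    · positivity
    · nlinarith
  have hb : (x - y) ^ 2 ∈ Set.Icc (0:ℝ) (Real.pi ^ 2) := by
    constructor
    · positivity
    · nlinarith
  have key := convex_cos_sqrt.2 ha hb (by norm_num : (0:ℝ) ≤ 1/2)
    (by norm_num : (0:ℝ) ≤ 1/2) (by norm_num)
  have hmid : (1/2 : ℝ) • ((x + y) ^ 2) + (1/2 : ℝ) • ((x - y) ^ 2) = x ^ 2 + y ^ 2 := by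
    simp only [smul_eq_mul]; ring
  rw [hmid] at key
  simp only [smul_eq_mul] at key
  have hfa : Real.cos (Real.sqrt ((x + y) ^ 2)) = Real.cos (x + y) := by
    rw [Real.sqrt_sq (by linarith)]
  have hfb : Real.cos (Real.sqrt ((x - y) ^ 2)) = Real.cos (x - y) := by
    rw [Real.sqrt_sq_eq_abs, Real.cos_abs]
  rw [hfa, hfb] at key
  calc Real.cos (Real.sqrt (x ^ 2 + y ^ 2))
      ≤ 1/2 * Real.cos (x + y) + 1/2 * Real.cos (x - y) := key
    _ = Real.cos x * Real.cos y := by rw [Real.cos_add, Real.cos_sub]; ring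
end

section
/- For all real numbers a, b in [0,1], arccos(a·b) ≤ √(arccos(a)² + arccos(b)²). -/
set_option maxHeartbeats 800000

open Real Set

/-- `y * cos y ≤ sin y` on `[0, π/2]`. -/
lemma aux_mul_cos_le_sin {y : ℝ} (h0 : 0 ≤ y) (h : y ≤ π / 2) : y * Real.cos y ≤ Real.sin y := by
  rcases eq_or_lt_of_le h0 with h0' | h0'
  · simp [← h0']
  rcases eq_or_lt_of_le h with h' | h'
  · rw [h']
    simp [Real.cos_pi_div_two, Real.sin_pi_div_two]
  · have hc : 0 < Real.cos y := Real.cos_pos_of_mem_Ioo ⟨by linarith [Real.pi_pos], h'⟩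
    have ht := Real.lt_tan h0' h'
    rw [Real.tan_eq_sin_div_cos] at ht
    exact le_of_lt ((lt_div_iff₀ hc).mp ht)

/-- Key lemma: `arccos (cos x * cos y) ≤ √(x² + y²)` for `x, y ∈ [0, π/2]`. -/
lemma aux_arccos_cos_mul_cos {x y : ℝ} (hx : x ∈ Set.Icc 0 (π / 2))
    (hy : y ∈ Set.Icc 0 (π / 2)) :
    Real.arccos (Real.cos x * Real.cos y) ≤ Real.sqrt (x ^ 2 + y ^ 2) := by
  obtain ⟨hx0, hx2⟩ := hx
  obtain ⟨hy0, hy2⟩ := hy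
  set H : ℝ → ℝ := fun t => Real.sqrt (t ^ 2 + y ^ 2) - Real.arccos (Real.cos t * Real.cos y)
    with hH
  have hpi := Real.pi_pos
  -- continuity of H on [0, π/2]
  have hcont : ContinuousOn H (Set.Icc 0 (π / 2)) := by
    apply ContinuousOn.sub
    · exact (Real.continuous_sqrt.comp (by continuity)).continuousOn
    · exact (Real.continuous_arccos.comp (by continuity)).continuousOn
  -- derivative information at interior points
  have hderiv : ∀ t ∈ Set.Ioo (0 : ℝ) (π / 2),
      HasDerivAt H (t / Real.sqrt (t ^ 2 + y ^ 2)
        - Real.sin t * Real.cos y / Real.sqrt (1 - (Real.cos t * Real.cos y) ^ 2)) t := by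
    intro t ht
    obtain ⟨ht0, ht2⟩ := ht
    have hr : (0 : ℝ) < t ^ 2 + y ^ 2 := by positivity
    have hct : Real.cos t < 1 := by
      have := Real.cos_lt_cos_of_nonneg_of_le_pi (le_refl 0) (by linarith) ht0
      simpa using this
    have hct0 : 0 ≤ Real.cos t := Real.cos_nonneg_of_mem_Icc ⟨by linarith, le_of_lt ht2⟩
    have hcy0 : 0 ≤ Real.cos y := Real.cos_nonneg_of_mem_Icc ⟨by linarith, hy2⟩
    have hcy1 : Real.cos y ≤ 1 := Real.cos_le_one y
    have hg1 : Real.cos t * Real.cos y < 1 := by nlinarith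
    have hg0 : 0 ≤ Real.cos t * Real.cos y := mul_nonneg hct0 hcy0
    -- sqrt part
    have h1 : HasDerivAt (fun s : ℝ => s ^ 2 + y ^ 2) (2 * t) t := by
      simpa using (hasDerivAt_pow 2 t).add_const (y ^ 2)
    have h2 : HasDerivAt (fun s : ℝ => Real.sqrt (s ^ 2 + y ^ 2))
        (1 / (2 * Real.sqrt (t ^ 2 + y ^ 2)) * (2 * t)) t :=
      (Real.hasDerivAt_sqrt (ne_of_gt hr)).comp t h1
    -- arccos part
    have h3 : HasDerivAt (fun s : ℝ => Real.cos s * Real.cos y) (-Real.sin t * Real.cos y) t :=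
      (Real.hasDerivAt_cos t).mul_const _
    have h4 : HasDerivAt (fun s : ℝ => Real.arccos (Real.cos s * Real.cos y))
        (-(1 / Real.sqrt (1 - (Real.cos t * Real.cos y) ^ 2)) * (-Real.sin t * Real.cos y)) t :=
      by have := (Real.hasDerivAt_arccos (x := Real.cos t * Real.cos y) (by linarith) (ne_of_lt hg1)).comp t h3; exact this
    have h5 : HasDerivAt H _ t := h2.sub h4
    convert h5 using 1
    have hsq : Real.sqrt (t ^ 2 + y ^ 2) ≠ 0 := by positivity
    field_simp
  -- the derivative is nonnegative
  have hderiv_nonneg : ∀ t ∈ Set.Ioo (0 : ℝ) (π / 2),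
      0 ≤ t / Real.sqrt (t ^ 2 + y ^ 2)
        - Real.sin t * Real.cos y / Real.sqrt (1 - (Real.cos t * Real.cos y) ^ 2) := by
    intro t ht
    obtain ⟨ht0, ht2⟩ := ht
    have hr : (0 : ℝ) < t ^ 2 + y ^ 2 := by positivity
    have hct : Real.cos t < 1 := by
      have := Real.cos_lt_cos_of_nonneg_of_le_pi (le_refl 0) (by linarith) ht0
      simpa using this
    have hct0 : 0 ≤ Real.cos t := Real.cos_nonneg_of_mem_Icc ⟨by linarith, le_of_lt ht2⟩
    have hcy0 : 0 ≤ Real.cos y := Real.cos_nonneg_of_mem_Icc ⟨by linarith, hy2⟩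
    have hcy1 : Real.cos y ≤ 1 := Real.cos_le_one y
    have hg1 : Real.cos t * Real.cos y < 1 := by nlinarith
    have hg0 : 0 ≤ Real.cos t * Real.cos y := mul_nonneg hct0 hcy0
    have h1g : (0 : ℝ) < 1 - (Real.cos t * Real.cos y) ^ 2 := by nlinarith
    have hsr : (0 : ℝ) < Real.sqrt (t ^ 2 + y ^ 2) := Real.sqrt_pos.mpr hr
    have hsg : (0 : ℝ) < Real.sqrt (1 - (Real.cos t * Real.cos y) ^ 2) := Real.sqrt_pos.mpr h1g
    rw [sub_nonneg, div_le_div_iff₀ hsg hsr]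
    have hst0 : 0 ≤ Real.sin t :=
      Real.sin_nonneg_of_nonneg_of_le_pi (le_of_lt ht0) (by linarith)
    have hst : Real.sin t ≤ t := Real.sin_le (le_of_lt ht0)
    have hyc : y * Real.cos y ≤ Real.sin y := aux_mul_cos_le_sin hy0 hy2
    have hsy0 : 0 ≤ Real.sin y := Real.sin_nonneg_of_nonneg_of_le_pi hy0 (by linarith)
    -- key algebraic inequality
    have key : y * Real.sin t * Real.cos y ≤ t * Real.sin y := by
      calc y * Real.sin t * Real.cos y ≤ y * t * Real.cos y := by
            nlinarith [mul_le_mul_of_nonneg_left hst (mul_nonneg hy0 hcy0)]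
        _ = t * (y * Real.cos y) := by ring
        _ ≤ t * Real.sin y := by
            nlinarith [mul_le_mul_of_nonneg_left hyc (le_of_lt ht0)]
    have key2 : (y * Real.sin t * Real.cos y) ^ 2 ≤ (t * Real.sin y) ^ 2 := by
      apply pow_le_pow_left₀ (by positivity) key
    have main : (Real.sin t * Real.cos y) ^ 2 * (t ^ 2 + y ^ 2)
        ≤ t ^ 2 * (1 - (Real.cos t * Real.cos y) ^ 2) := by
      have hst2 : Real.sin t ^ 2 + Real.cos t ^ 2 = 1 := Real.sin_sq_add_cos_sq t
      have hsy2 : Real.sin y ^ 2 + Real.cos y ^ 2 = 1 := Real.sin_sq_add_cos_sq y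
      have m1 : t ^ 2 * Real.cos y ^ 2 * (Real.sin t ^ 2 + Real.cos t ^ 2)
          = t ^ 2 * Real.cos y ^ 2 := by rw [hst2]; ring
      have m2 : t ^ 2 * (Real.sin y ^ 2 + Real.cos y ^ 2) = t ^ 2 := by rw [hsy2]; ring
      nlinarith [key2, m1, m2]
    calc Real.sin t * Real.cos y * Real.sqrt (t ^ 2 + y ^ 2)
        = Real.sqrt ((Real.sin t * Real.cos y) ^ 2 * (t ^ 2 + y ^ 2)) := by
          rw [Real.sqrt_mul (sq_nonneg _), Real.sqrt_sq (mul_nonneg hst0 hcy0)]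
      _ ≤ Real.sqrt (t ^ 2 * (1 - (Real.cos t * Real.cos y) ^ 2)) := Real.sqrt_le_sqrt main
      _ = t * Real.sqrt (1 - (Real.cos t * Real.cos y) ^ 2) := by
          rw [Real.sqrt_mul (sq_nonneg _), Real.sqrt_sq (le_of_lt ht0)]
  -- H is monotone on [0, π/2]
  have hmono : MonotoneOn H (Set.Icc 0 (π / 2)) := by
    apply monotoneOn_of_deriv_nonneg (convex_Icc _ _) hcont
    · intro t ht
      rw [interior_Icc] at ht
      exact ((hderiv t ht).differentiableAt).differentiableWithinAt
    · intro t ht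
      rw [interior_Icc] at ht
      rw [(hderiv t ht).deriv]
      exact hderiv_nonneg t ht
  have hH0 : H 0 = 0 := by
    simp only [hH]
    rw [Real.cos_zero, one_mul]
    rw [show (0:ℝ) ^ 2 + y ^ 2 = y ^ 2 by ring, Real.sqrt_sq hy0,
      Real.arccos_cos hy0 (by linarith), sub_self]
  have := hmono (Set.mem_Icc.mpr ⟨le_refl 0, by linarith⟩) (Set.mem_Icc.mpr ⟨hx0, hx2⟩) hx0
  rw [hH0] at this
  simpa [hH, sub_nonneg] using this

theorem arccos_mul_le_sqrt (a b : ℝ) (ha : a ∈ Set.Icc (0:ℝ) 1) (hb : b ∈ Set.Icc (0:ℝ) 1) :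
    Real.arccos (a * b) ≤ Real.sqrt (Real.arccos a ^ 2 + Real.arccos b ^ 2) := by
  obtain ⟨ha0, ha1⟩ := ha
  obtain ⟨hb0, hb1⟩ := hb
  have hx : Real.arccos a ∈ Set.Icc 0 (π / 2) :=
    ⟨Real.arccos_nonneg a, Real.arccos_le_pi_div_two.mpr ha0⟩
  have hy : Real.arccos b ∈ Set.Icc 0 (π / 2) :=
    ⟨Real.arccos_nonneg b, Real.arccos_le_pi_div_two.mpr hb0⟩
  have hca : Real.cos (Real.arccos a) = a := Real.cos_arccos (by linarith) ha1
  have hcb : Real.cos (Real.arccos b) = b := Real.cos_arccos (by linarith) hb1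
  have := aux_arccos_cos_mul_cos hx hy
  rwa [hca, hcb] at this
end

section
/- For any finite family of real numbers λ₁,…,λ_m, each in [0,1], one has arccos(∏ᵢ λᵢ) ≤ √(∑ᵢ arccos(λᵢ)²). -/
open Real Set

private lemma sin_div_antitone {a b : ℝ} (ha : 0 < a) (hab : a ≤ b) (hb : b ≤ π) :
    a * Real.sin b ≤ b * Real.sin a := by
  have hb0 : 0 < b := lt_of_lt_of_le ha hab
  have ht : a / b ∈ Icc (0:ℝ) 1 := ⟨by positivity, (div_le_one hb0).2 hab⟩
  have hcon := strictConcaveOn_sin_Icc.concaveOn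
  have h0 : (0:ℝ) ∈ Icc 0 π := ⟨le_refl _, Real.pi_pos.le⟩
  have hbmem : b ∈ Icc 0 π := ⟨hb0.le, hb⟩
  have key : (1 - a/b) • Real.sin 0 + (a/b) • Real.sin b
      ≤ Real.sin ((1 - a/b) • (0:ℝ) + (a/b) • b) :=
    hcon.2 h0 hbmem (by linarith [ht.2]) ht.1 (by ring)
  simp only [smul_eq_mul, mul_zero, Real.sin_zero, zero_add] at key
  have habeq : a / b * b = a := by field_simp
  rw [habeq] at key
  rw [div_mul_eq_mul_div, div_le_iff₀ hb0] at key
  linarith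

private lemma hasDerivAt_cos_sqrt {u : ℝ} (hu : 0 < u) :
    HasDerivAt (fun v => Real.cos (Real.sqrt v))
      (-Real.sin (Real.sqrt u) * (1 / (2 * Real.sqrt u))) u :=
  (Real.hasDerivAt_sqrt hu.ne').cos

private lemma convexOn_cos_sqrt :
    ConvexOn ℝ (Icc (0:ℝ) (π ^ 2)) (fun u => Real.cos (Real.sqrt u)) := by
  have hint : interior (Icc (0:ℝ) (π ^ 2)) = Ioo 0 (π ^ 2) := interior_Icc
  have hderiv : ∀ u ∈ Ioo (0:ℝ) (π ^ 2),
      deriv (fun v => Real.cos (Real.sqrt v)) u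
        = -Real.sin (Real.sqrt u) * (1 / (2 * Real.sqrt u)) := fun u hu =>
    (hasDerivAt_cos_sqrt hu.1).deriv
  apply MonotoneOn.convexOn_of_deriv (convex_Icc _ _)
  · exact (Real.continuous_cos.comp Real.continuous_sqrt).continuousOn
  · rw [hint]
    intro u hu
    exact (hasDerivAt_cos_sqrt hu.1).differentiableAt.differentiableWithinAt
  · rw [hint]
    intro u hu v hv huv
    rw [hderiv u hu, hderiv v hv]
    set a := Real.sqrt u with ha
    set b := Real.sqrt v with hb
    have ha0 : 0 < a := Real.sqrt_pos.2 hu.1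
    have hab : a ≤ b := Real.sqrt_le_sqrt huv
    have hbpi : b ≤ π := by
      rw [hb, show π = Real.sqrt (π ^ 2) from (Real.sqrt_sq Real.pi_pos.le).symm]
      exact Real.sqrt_le_sqrt hv.2.le
    have hb0 : 0 < b := lt_of_lt_of_le ha0 hab
    have key : a * Real.sin b ≤ b * Real.sin a := sin_div_antitone ha0 hab hbpi
    rw [neg_mul, neg_mul, neg_le_neg_iff, mul_one_div, mul_one_div,
      div_le_div_iff₀ (by positivity) (by positivity)]
    nlinarith [key]

private lemma cos_sqrt_le_cos_mul_cos {s t : ℝ} (hs : s ∈ Icc (0:ℝ) (π/2))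
    (ht : t ∈ Icc (0:ℝ) (π/2)) :
    Real.cos (Real.sqrt (s ^ 2 + t ^ 2)) ≤ Real.cos s * Real.cos t := by
  have hpi : (0:ℝ) < π := Real.pi_pos
  have hx : (s - t) ^ 2 ∈ Icc (0:ℝ) (π ^ 2) := by
    constructor
    · positivity
    · nlinarith [hs.1, hs.2, ht.1, ht.2]
  have hy : (s + t) ^ 2 ∈ Icc (0:ℝ) (π ^ 2) := by
    constructor
    · positivity
    · nlinarith [hs.1, hs.2, ht.1, ht.2]
  have key := convexOn_cos_sqrt.2 hx hy (show (0:ℝ) ≤ 1/2 by norm_num)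
    (show (0:ℝ) ≤ 1/2 by norm_num) (show (1:ℝ)/2 + 1/2 = 1 by norm_num)
  simp only [smul_eq_mul] at key
  have h1 : (1:ℝ)/2 * (s - t)^2 + 1/2 * (s + t)^2 = s ^ 2 + t ^ 2 := by ring
  rw [h1] at key
  have h2 : Real.sqrt ((s - t) ^ 2) = |s - t| := Real.sqrt_sq_eq_abs _
  have h3 : Real.sqrt ((s + t) ^ 2) = s + t := by
    rw [Real.sqrt_sq (by linarith [hs.1, ht.1])]
  rw [h2, h3, Real.cos_abs] at key
  calc Real.cos (Real.sqrt (s ^ 2 + t ^ 2))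
      ≤ 1/2 * Real.cos (s - t) + 1/2 * Real.cos (s + t) := key
    _ = Real.cos s * Real.cos t := by
        rw [Real.cos_sub, Real.cos_add]; ring

private lemma arccos_mul_le {x y : ℝ} (hx : x ∈ Icc (0:ℝ) 1) (hy : y ∈ Icc (0:ℝ) 1) :
    Real.arccos (x * y) ≤ Real.sqrt (Real.arccos x ^ 2 + Real.arccos y ^ 2) := by
  set s := Real.arccos x with hs
  set t := Real.arccos y with ht
  have hsmem : s ∈ Icc (0:ℝ) (π/2) :=
    ⟨Real.arccos_nonneg x, Real.arccos_le_pi_div_two.2 hx.1⟩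
  have htmem : t ∈ Icc (0:ℝ) (π/2) :=
    ⟨Real.arccos_nonneg y, Real.arccos_le_pi_div_two.2 hy.1⟩
  set r := Real.sqrt (s ^ 2 + t ^ 2) with hr
  have hr0 : 0 ≤ r := Real.sqrt_nonneg _
  have hrpi : r ≤ π := by
    rw [hr, show π = Real.sqrt (π ^ 2) from (Real.sqrt_sq Real.pi_pos.le).symm]
    apply Real.sqrt_le_sqrt
    nlinarith [hsmem.1, hsmem.2, htmem.1, htmem.2, Real.pi_pos]
  have hcos : Real.cos r ≤ x * y := by
    have := cos_sqrt_le_cos_mul_cos hsmem htmem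
    rwa [hs, ht, Real.cos_arccos (by linarith [hx.1]) hx.2,
      Real.cos_arccos (by linarith [hy.1]) hy.2] at this
  have hxy0 : 0 ≤ x * y := mul_nonneg hx.1 hy.1
  have hxy1 : x * y ≤ 1 := mul_le_one₀ hx.2 hy.1 hy.2
  have hmono := Real.strictAntiOn_arccos.antitoneOn
    (a := Real.cos r) (b := x * y)
    ⟨Real.neg_one_le_cos r, (Real.cos_le_one r)⟩
    ⟨by linarith, hxy1⟩ hcos
  calc Real.arccos (x * y) ≤ Real.arccos (Real.cos r) := hmono
    _ = r := Real.arccos_cos hr0 hrpi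

private lemma arccos_prod_finset {ι : Type*} (s : Finset ι) (l : ι → ℝ)
    (hl : ∀ i, l i ∈ Icc (0:ℝ) 1) :
    Real.arccos (∏ i ∈ s, l i) ≤ Real.sqrt (∑ i ∈ s, Real.arccos (l i) ^ 2) := by
  induction s using Finset.cons_induction with
  | empty => simp [Real.arccos_one]
  | cons a s ha ih =>
    rw [Finset.prod_cons, Finset.sum_cons]
    have hprod : (∏ i ∈ s, l i) ∈ Icc (0:ℝ) 1 := by
      constructor
      · exact Finset.prod_nonneg (fun i _ => (hl i).1)
      · exact Finset.prod_le_one (fun i _ => (hl i).1) (fun i _ => (hl i).2)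
    calc Real.arccos (l a * ∏ i ∈ s, l i)
        ≤ Real.sqrt (Real.arccos (l a) ^ 2 + Real.arccos (∏ i ∈ s, l i) ^ 2) :=
          arccos_mul_le (hl a) hprod
      _ ≤ Real.sqrt (Real.arccos (l a) ^ 2 + ∑ i ∈ s, Real.arccos (l i) ^ 2) := by
          apply Real.sqrt_le_sqrt
          have h1 : Real.arccos (∏ i ∈ s, l i) ^ 2 ≤ ∑ i ∈ s, Real.arccos (l i) ^ 2 := by
            have h2 := ih
            have h3 : 0 ≤ Real.arccos (∏ i ∈ s, l i) := Real.arccos_nonneg _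
            nlinarith [Real.sq_sqrt (show (0:ℝ) ≤ ∑ i ∈ s, Real.arccos (l i) ^ 2 from
              Finset.sum_nonneg (fun i _ => sq_nonneg _)), Real.sqrt_nonneg
              (∑ i ∈ s, Real.arccos (l i) ^ 2)]
          linarith

theorem arccos_prod_le_sqrt_sum_sq {m : ℕ} (l : Fin m → ℝ)
    (hl : ∀ i, l i ∈ Set.Icc (0:ℝ) 1) :
    Real.arccos (∏ i, l i) ≤ Real.sqrt (∑ i, Real.arccos (l i) ^ 2) := by
  exact arccos_prod_finset Finset.univ l hl
end
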